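/- Let (Λ₀, Λ) be a finitely aligned relative category of paths and let F ⊆ Λ₀ be a finite nonempty subset. Then ⋁F is finite, ⋁F ⊆ Λ₀, and ⋂_{α∈F} αΛ = ⋃_{β∈⋁F} βΛ. -/

import Mathlib

universe u v

/-- A category of paths: a small category (objects identified with identity
morphisms) with left and right cancellation and no inverses. -/
structure CategoryOfPaths (Λ : Type u) where
  s : Λ → Λ
  r : Λ → Λ
  comp : Λ → Λ → Λ
  s_comp : ∀ {α β : Λ}, s α = r β → s (comp α β) = s β
  r_comp : ∀ {α β : Λ}, s α = r β → r (comp α β) = r α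
  comp_assoc : ∀ {α β γ : Λ}, s α = r β → s β = r γ →
    comp (comp α β) γ = comp α (comp β γ)
  id_comp : ∀ α : Λ, comp (r α) α = α
  comp_id : ∀ α : Λ, comp α (s α) = α
  s_r : ∀ α : Λ, s (r α) = r α
  r_r : ∀ α : Λ, r (r α) = r α
  r_s : ∀ α : Λ, r (s α) = s α
  s_s : ∀ α : Λ, s (s α) = s α
  left_cancel : ∀ {α β γ : Λ}, s α = r β → s α = r γ → comp α β = comp α γ → β = γ
  right_cancel : ∀ {β γ α : Λ}, s β = r α → s γ = r α → comp β α = comp γ α → β = γ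
  no_inverses : ∀ {α β : Λ}, s α = r β → comp α β = s β → α = s β ∧ β = s β

variable {Λ : Type u}

/-- The tail set `αΛ`. -/
def pTail (C : CategoryOfPaths Λ) (α : Λ) : Set Λ :=
  {x | ∃ β, C.s α = C.r β ∧ x = C.comp α β}

/-- `vΛ`, the paths with range `v`. -/
def pRng (C : CategoryOfPaths Λ) (w : Λ) : Set Λ := {α | C.r α = w}

/-- `Λv`, the paths with source `v`. -/
def pSrc (C : CategoryOfPaths Λ) (w : Λ) : Set Λ := {α | C.s α = w}

/-- `[β]`, the initial segments of `β`. -/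
def pSeg (C : CategoryOfPaths Λ) (β : Λ) : Set Λ := {α | β ∈ pTail C α}

/-- `α ⋔ β`. -/
def pMeets (C : CategoryOfPaths Λ) (α β : Λ) : Prop :=
  (pTail C α ∩ pTail C β).Nonempty

/-- `αE`. -/
def pMulSet (C : CategoryOfPaths Λ) (α : Λ) (E : Set Λ) : Set Λ :=
  {x | ∃ β ∈ E, C.s α = C.r β ∧ x = C.comp α β}

/-- `σ^α(E ∩ αΛ)`, computed inside an ambient subcategory `S`. -/
def pShiftIn (C : CategoryOfPaths Λ) (S : Set Λ) (α : Λ) (E : Set Λ) : Set Λ :=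
  {β | β ∈ S ∧ C.s α = C.r β ∧ C.comp α β ∈ E}

/-- `σ^α(E ∩ αΛ)`. -/
def pShift (C : CategoryOfPaths Λ) (α : Λ) (E : Set Λ) : Set Λ :=
  {β | C.s α = C.r β ∧ C.comp α β ∈ E}

/-- `⋁F`: the minimal common extensions of `F`. -/
def pMinExt (C : CategoryOfPaths Λ) (F : Set Λ) : Set Λ :=
  {ε | (∀ α ∈ F, ε ∈ pTail C α) ∧
    ∀ γ, (∀ α ∈ F, γ ∈ pTail C α) → ε ∈ pTail C γ → γ = ε}

/-- `α ∨ β`: the minimal common extensions of `α` and `β`. -/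
def pMinCE (C : CategoryOfPaths Λ) (α β : Λ) : Set Λ := pMinExt C {α, β}

/-- A subcategory of a category of paths, as a set of morphisms. -/
structure IsSubcategory (C : CategoryOfPaths Λ) (Λ₀ : Set Λ) : Prop where
  comp_mem : ∀ {α β : Λ}, α ∈ Λ₀ → β ∈ Λ₀ → C.s α = C.r β → C.comp α β ∈ Λ₀
  s_mem : ∀ {α : Λ}, α ∈ Λ₀ → C.s α ∈ Λ₀
  r_mem : ∀ {α : Λ}, α ∈ Λ₀ → C.r α ∈ Λ₀

/-- A finitely aligned category of paths. -/
def FinitelyAligned (C : CategoryOfPaths Λ) : Prop :=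
  ∀ α β : Λ, ∃ G : Set Λ, G.Finite ∧
    pTail C α ∩ pTail C β = ⋃ ε ∈ G, pTail C ε

/-- A finitely aligned relative category of paths `(Λ₀, Λ)`. -/
def RelFinitelyAligned (C : CategoryOfPaths Λ) (Λ₀ : Set Λ) : Prop :=
  (∀ α ∈ Λ₀, ∀ β ∈ Λ₀, ∃ G : Set Λ, G.Finite ∧ G ⊆ Λ₀ ∧
      pTail C α ∩ pTail C β = ⋃ ε ∈ G, pTail C ε) ∧
  (∀ α ∈ Λ₀, pTail C α ∩ Λ₀ = pMulSet C α Λ₀)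

/-- A ring of sets: contains `∅` and is closed under `∪`, `∩`, and `\`. -/
def IsSetRing {γ : Type v} (R : Set (Set γ)) : Prop :=
  ∅ ∈ R ∧ (∀ E ∈ R, ∀ F ∈ R, E ∪ F ∈ R) ∧ (∀ E ∈ R, ∀ F ∈ R, E ∩ F ∈ R) ∧
    (∀ E ∈ R, ∀ F ∈ R, E \ F ∈ R)

/-- A ring of sets on `S`: a ring of sets all of whose members are subsets of `S`. -/
def IsSetRingOn {γ : Type v} (S : Set γ) (R : Set (Set γ)) : Prop :=
  IsSetRing R ∧ ∀ E ∈ R, E ⊆ S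

/-- The ring of sets generated by a collection. -/
def setRingGen {γ : Type v} (G : Set (Set γ)) : Set (Set γ) :=
  ⋂₀ {R | IsSetRing R ∧ G ⊆ R}

/-- The ring of sets on `S` generated by a collection. -/
def setRingGenOn {γ : Type v} (S : Set γ) (G : Set (Set γ)) : Set (Set γ) :=
  ⋂₀ {R | IsSetRingOn S R ∧ G ⊆ R}

/-- A zigzag: a list of pairs `(αᵢ, βᵢ)` with `r αᵢ = r βᵢ` and `s αᵢ₊₁ = s βᵢ`. -/
def IsZigzag (C : CategoryOfPaths Λ) (l : List (Λ × Λ)) : Prop :=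
  (∀ p ∈ l, C.r p.1 = C.r p.2) ∧ l.Chain' (fun p q => C.s q.1 = C.s p.2)

/-- The (graph of the) zigzag map `φ_ζ = σ^{α₁} β₁ ⋯ σ^{αₙ} βₙ`, computed
inside an ambient subcategory `S`. -/
def zigzagRelIn (C : CategoryOfPaths Λ) (S : Set Λ) : List (Λ × Λ) → Λ → Λ → Prop
  | [], x, y => x = y ∧ x ∈ S
  | p :: rest, x, y => ∃ z, zigzagRelIn C S rest x z ∧ C.s p.2 = C.r z ∧
      C.s p.1 = C.r y ∧ y ∈ S ∧ C.comp p.2 z = C.comp p.1 y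

/-- `A(ζ)`: the domain of the zigzag map. -/
def zigzagDomIn (C : CategoryOfPaths Λ) (S : Set Λ) (l : List (Λ × Λ)) : Set Λ :=
  {x | ∃ y, zigzagRelIn C S l x y}

/-- `𝒟(Λ₀,Λ)⁰_v`: nonempty zigzag sets with entries in `Λ₀` and source `v`,
computed inside the ambient subcategory `S`. -/
def relD0 (C : CategoryOfPaths Λ) (Λ₀ S : Set Λ) (w : Λ) : Set (Set Λ) :=
  {E | E.Nonempty ∧ ∃ (l : List (Λ × Λ)) (h : l ≠ []),
    IsZigzag C l ∧ (∀ p ∈ l, p.1 ∈ Λ₀ ∧ p.2 ∈ Λ₀) ∧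
    C.s (l.getLast h).2 = w ∧ E = zigzagDomIn C S l}

/-- `𝒜(Λ₀,Λ)_v`: the ring of sets generated by the zigzag sets. -/
def relAring (C : CategoryOfPaths Λ) (Λ₀ S : Set Λ) (w : Λ) : Set (Set Λ) :=
  setRingGenOn {α | α ∈ S ∧ C.r α = w} (relD0 C Λ₀ S w)

/-- A filter in a ring of sets. -/
def IsFilterIn {γ : Type v} (R U : Set (Set γ)) : Prop :=
  U.Nonempty ∧ U ⊆ R ∧ (∀ E ∈ U, E.Nonempty) ∧
    (∀ E ∈ U, ∀ F ∈ U, E ∩ F ∈ U) ∧ (∀ E ∈ U, ∀ F ∈ R, E ⊆ F → F ∈ U)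

/-- An ultrafilter in a ring of sets: a maximal filter. -/
def IsUltrafilterIn {γ : Type v} (R U : Set (Set γ)) : Prop :=
  IsFilterIn R U ∧ ∀ V, IsFilterIn R V → U ⊆ V → V = U

/-- A filter base in a ring of sets. -/
def IsFilterBaseIn {γ : Type v} (R B : Set (Set γ)) : Prop :=
  B.Nonempty ∧ B ⊆ R ∧ (∀ E ∈ B, E.Nonempty) ∧
    ∀ E ∈ B, ∀ F ∈ B, ∃ G ∈ B, G ⊆ E ∩ F

/-- The filter generated by a filter base. -/
def filterGenBy {γ : Type v} (R B : Set (Set γ)) : Set (Set γ) :=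
  {E | E ∈ R ∧ ∃ F ∈ B, F ⊆ E}

/-- An ultrafilter base in a ring of sets. -/
def IsUltrafilterBaseIn {γ : Type v} (R B : Set (Set γ)) : Prop :=
  IsFilterBaseIn R B ∧ IsUltrafilterIn R (filterGenBy R B)

/-- A Boolean ring homomorphism defined on a ring of sets `A` with values in a
generalized Boolean algebra. -/
def IsBRHomOn {γ : Type v} {R : Type*} [GeneralizedBooleanAlgebra R]
    (A : Set (Set γ)) (ν : Set γ → R) : Prop :=
  ν ∅ = ⊥ ∧ (∀ E ∈ A, ∀ F ∈ A, ν (E ∪ F) = ν E ⊔ ν F) ∧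
    (∀ E ∈ A, ∀ F ∈ A, ν (E ∩ F) = ν E ⊓ ν F) ∧
    (∀ E ∈ A, ∀ F ∈ A, ν (E \ F) = ν E \ ν F)

/-- `𝒜_v`: the ring of sets on `vΛ` generated by the tail sets. -/
def tailRing (C : CategoryOfPaths Λ) (w : Λ) : Set (Set Λ) :=
  setRingGenOn (pRng C w) {E | ∃ α, C.r α = w ∧ E = pTail C α}

/-- A directed subset. -/
def pDirected (C : CategoryOfPaths Λ) (x : Set Λ) : Prop :=
  ∀ α ∈ x, ∀ β ∈ x, (pTail C α ∩ pTail C β ∩ x).Nonempty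

/-- A hereditary subset. -/
def pHereditary (C : CategoryOfPaths Λ) (x : Set Λ) : Prop :=
  ∀ γ ∈ x, ∀ α : Λ, γ ∈ pTail C α → α ∈ x

/-- `vΛ*`: the nonempty directed hereditary subsets of `vΛ`. -/
def lamStar (C : CategoryOfPaths Λ) (w : Λ) : Set (Set Λ) :=
  {x | x.Nonempty ∧ x ⊆ pRng C w ∧ pDirected C x ∧ pHereditary C x}

/-- `vΛ**`: the maximal directed subsets of `vΛ`. -/
def lamStarStar (C : CategoryOfPaths Λ) (w : Λ) : Set (Set Λ) :=
  {x | x ⊆ pRng C w ∧ pDirected C x ∧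
    ∀ y, y ⊆ pRng C w → pDirected C y → x ⊆ y → y = x}

/-- `αx = ⋃_{γ ∈ x} [αγ]` for `x ∈ s(α)Λ*`. -/
def pMulStar (C : CategoryOfPaths Λ) (α : Λ) (x : Set Λ) : Set Λ :=
  {δ | ∃ γ ∈ x, C.s α = C.r γ ∧ C.comp α γ ∈ pTail C δ}

/-- `𝒰_{C,0}`. -/
def UC0 (C : CategoryOfPaths Λ) (w : Λ) (x : Set Λ) : Set (Set Λ) :=
  {E | E ∈ tailRing C w ∧ ∃ α ∈ x, pTail C α ⊆ E}

/-- `𝒰_C`. -/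
def UC (C : CategoryOfPaths Λ) (w : Λ) (x : Set Λ) : Set (Set Λ) :=
  {E | E ∈ tailRing C w ∧ ∃ α ∈ x, x ∩ pTail C α ⊆ E}

/-- `X_v = vΛ*` as a type. -/
abbrev Xv (C : CategoryOfPaths Λ) (w : Λ) : Type u := {x : Set Λ // x ∈ lamStar C w}

/-- The topology on `X_v` generated by the sets `Ê`, `E ∈ 𝒜_v`. -/
def XvTop (C : CategoryOfPaths Λ) (w : Λ) : TopologicalSpace (Xv C w) :=
  TopologicalSpace.generateFrom
    {t | ∃ E ∈ tailRing C w, t = {x : Xv C w | E ∈ UC C w x.1}}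

/-- The vertices of `Λ`. -/
abbrev Vertex (C : CategoryOfPaths Λ) : Type u := {w : Λ // C.r w = w}

/-- `X`: the disjoint union of the spaces `X_v`. -/
abbrev Xtotal (C : CategoryOfPaths Λ) : Type u := Σ w : Vertex C, Xv C w.1

/-- The disjoint union topology on `X`. -/
def XtotalTop (C : CategoryOfPaths Λ) : TopologicalSpace (Xtotal C) :=
  letI : ∀ w : Vertex C, TopologicalSpace (Xv C w.1) := fun w => XvTop C w.1
  inferInstance

/-- The boundary `∂Λ`: the closure of `Λ**` in `X`. -/
def boundarySet (C : CategoryOfPaths Λ) : Set (Xtotal C) :=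
  @closure _ (XtotalTop C) {p : Xtotal C | p.2.1 ∈ lamStarStar C p.1.1}

/-- An exhaustive subset of `vΛ`. -/
def ExhaustiveAt (C : CategoryOfPaths Λ) (w : Λ) (F : Set Λ) : Prop :=
  ∀ α, C.r α = w → ∃ β ∈ F, pMeets C α β

/-- An aperiodic point of `Λ*`. -/
def pAperiodic (C : CategoryOfPaths Λ) (x : Set Λ) : Prop :=
  ∀ α ∈ x, ∀ β ∈ x, α ≠ β → pShift C α x ≠ pShift C β x

/-- A right-aperiodic point of `wΛ*`. -/
def pRightAperiodicAt (C : CategoryOfPaths Λ) (w : Λ) (x : Set Λ) : Prop :=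
  ∀ α β : Λ, C.s α = w → C.s β = w → α ≠ β → pMulStar C α x ≠ pMulStar C β x

/-- The triples `(α, β, x)` with `s α = s β` and `x ∈ s(α)Λ*`. -/
abbrev pTrip (C : CategoryOfPaths Λ) : Type u :=
  {t : Λ × Λ × Set Λ // C.s t.1 = C.s t.2.1 ∧ t.2.2 ∈ lamStar C (C.s t.1)}

/-- The groupoid equivalence relation on triples. -/
def tripRel (C : CategoryOfPaths Λ) (t t' : pTrip C) : Prop :=
  ∃ (z : Set Λ) (δ δ' : Λ),
    z ∈ lamStar C (C.s δ) ∧ z ∈ lamStar C (C.s δ') ∧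
    C.s t.1.1 = C.r δ ∧ C.s t'.1.1 = C.r δ' ∧
    t.1.2.2 = pMulStar C δ z ∧ t'.1.2.2 = pMulStar C δ' z ∧
    C.comp t.1.1 δ = C.comp t'.1.1 δ' ∧
    C.comp t.1.2.1 δ = C.comp t'.1.2.1 δ'

/-- The ultrafilter space of `𝒜(Λ₀,Λ)_v`. -/
abbrev relXv (C : CategoryOfPaths Λ) (Λ₀ : Set Λ) (w : Λ) : Type u :=
  {U : Set (Set Λ) // IsUltrafilterIn (relAring C Λ₀ Set.univ w) U}

/-- The topology on the ultrafilter space of `𝒜(Λ₀,Λ)_v` generated by the `Ê`. -/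
def relXvTop (C : CategoryOfPaths Λ) (Λ₀ : Set Λ) (w : Λ) :
    TopologicalSpace (relXv C Λ₀ w) :=
  TopologicalSpace.generateFrom
    {t | ∃ E ∈ relAring C Λ₀ Set.univ w, t = {U : relXv C Λ₀ w | E ∈ U.1}}

lemma mem_pTail_self (C : CategoryOfPaths Λ) (α : Λ) : α ∈ pTail C α :=
  ⟨C.s α, (C.r_s α).symm, (C.comp_id α).symm⟩

lemma pTail_trans (C : CategoryOfPaths Λ) {α β x : Λ}
    (h1 : β ∈ pTail C α) (h2 : x ∈ pTail C β) : x ∈ pTail C α := by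
  obtain ⟨γ, hγ, rfl⟩ := h1
  obtain ⟨δ, hδ, rfl⟩ := h2
  have hsγ : C.s γ = C.r δ := by rw [← C.s_comp hγ]; exact hδ
  refine ⟨C.comp γ δ, ?_, ?_⟩
  · rw [C.r_comp hsγ]; exact hγ
  · exact C.comp_assoc hγ hsγ

lemma pTail_antisymm (C : CategoryOfPaths Λ) {α β : Λ}
    (h1 : β ∈ pTail C α) (h2 : α ∈ pTail C β) : α = β := by
  obtain ⟨γ, hγ, hβ⟩ := h1
  obtain ⟨δ, hδ, hα⟩ := h2
  subst hβ
  have hsγ : C.s γ = C.r δ := by rw [← C.s_comp hγ]; exact hδ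
  have hrγδ : C.s α = C.r (C.comp γ δ) := by rw [C.r_comp hsγ]; exact hγ
  have hα' : α = C.comp α (C.comp γ δ) := by
    rw [← C.comp_assoc hγ hsγ]; exact hα
  have hsa : C.s α = C.comp γ δ :=
    C.left_cancel (C.r_s α).symm hrγδ (by rw [C.comp_id α]; exact hα')
  have hsαδ : C.s α = C.s δ := by
    have h := congrArg C.s hα'
    rwa [C.s_comp hrγδ, C.s_comp hsγ] at h
  have hinv := C.no_inverses hsγ (hsa.symm.trans hsαδ)
  have hrδ : C.r δ = δ := by rw [hinv.2, C.r_s]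
  have hδ2 : C.s (C.comp α γ) = δ := hδ.trans hrδ
  conv_lhs => rw [hα, ← hδ2, C.comp_id]

lemma pTail_subset (C : CategoryOfPaths Λ) {α β : Λ} (h : β ∈ pTail C α) :
    pTail C β ⊆ pTail C α := fun _ hx => pTail_trans C h hx

/-- Existence of a finite `G ⊆ Λ₀` with `⋂_{α ∈ F} αΛ = ⋃_{ε ∈ G} εΛ`. -/
lemma exists_cover (C : CategoryOfPaths Λ) (Λ₀ : Set Λ)
    (hfa : RelFinitelyAligned C Λ₀) (F : Set Λ) (hfin : F.Finite) :
    F.Nonempty → F ⊆ Λ₀ → ∃ G : Set Λ, G.Finite ∧ G ⊆ Λ₀ ∧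
      (⋂ α ∈ F, pTail C α) = ⋃ ε ∈ G, pTail C ε := by
  refine Set.Finite.induction_on F hfin (by rintro ⟨x, hx⟩; exact absurd hx (by simp)) ?_
  rintro a s _ hsfin ih - hsub
  have ha0 : a ∈ Λ₀ := hsub (Set.mem_insert a s)
  by_cases hse : s.Nonempty
  · obtain ⟨G', hG'fin, hG'sub, hG'⟩ :=
      ih hse (fun x hx => hsub (Set.mem_insert_of_mem a hx))
    choose Gd hGdfin hGdsub hGdeq using
      fun (ε : Λ) (hε : ε ∈ G') => hfa.1 a ha0 ε (hG'sub hε)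
    refine ⟨⋃ ε, ⋃ hε : ε ∈ G', Gd ε hε, hG'fin.biUnion' hGdfin, ?_, ?_⟩
    · intro x hx
      simp only [Set.mem_iUnion] at hx
      obtain ⟨ε, hε, hx⟩ := hx
      exact hGdsub ε hε hx
    · have : (⋂ α ∈ insert a s, pTail C α) = pTail C a ∩ ⋂ α ∈ s, pTail C α := by
        simp [Set.biInter_insert]
      rw [this, hG']
      ext x
      simp only [Set.mem_inter_iff, Set.mem_iUnion]
      constructor
      · rintro ⟨hxa, ε, hε, hxε⟩
        have : x ∈ pTail C a ∩ pTail C ε := ⟨hxa, hxε⟩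
        rw [hGdeq ε hε] at this
        simp only [Set.mem_iUnion] at this
        obtain ⟨η, hη, hxη⟩ := this
        exact ⟨η, ⟨ε, hε, hη⟩, hxη⟩
      · rintro ⟨η, ⟨ε, hε, hη⟩, hxη⟩
        have : x ∈ pTail C a ∩ pTail C ε := by
          rw [hGdeq ε hε]
          simp only [Set.mem_iUnion]
          exact ⟨η, hη, hxη⟩
        exact ⟨this.1, ε, hε, this.2⟩
  · rw [Set.not_nonempty_iff_eq_empty] at hse
    subst hse
    exact ⟨{a}, Set.finite_singleton a, by simpa using ha0, by simp⟩

/-- A finite nonempty subset of a category of paths has a minimal element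
with respect to the extension order. -/
lemma exists_pMin (C : CategoryOfPaths Λ) {S : Set Λ} (hS : S.Finite)
    (hne : S.Nonempty) : ∃ ε ∈ S, ∀ ε' ∈ S, ε ∈ pTail C ε' → ε' = ε := by
  obtain ⟨ε, hε, hmax⟩ := Set.Finite.exists_maximalFor (fun δ => pTail C δ) S hS hne
  refine ⟨ε, hε, fun ε' hε' hmem => ?_⟩
  have hsub : pTail C ε ⊆ pTail C ε' := pTail_subset C hmem
  have heq := hmax hε' hsub
  have : ε' ∈ pTail C ε := heq (mem_pTail_self C ε')
  exact pTail_antisymm C hmem this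

/-- Lemma 2.2. In a finitely aligned relative category of
paths `(Λ₀, Λ)`, for any finite nonempty `F ⊆ Λ₀`, the set `⋁F` of minimal
common extensions is finite, contained in `Λ₀`, and
`⋂_{α ∈ F} αΛ = ⋃_{β ∈ ⋁F} βΛ`. -/
theorem statement1 {Λ : Type u} (C : CategoryOfPaths Λ) (Λ₀ : Set Λ)
    (hsub : IsSubcategory C Λ₀) (hfa : RelFinitelyAligned C Λ₀)
    (F : Set Λ) (hfin : F.Finite) (hne : F.Nonempty) (hF : F ⊆ Λ₀) :
    (pMinExt C F).Finite ∧ pMinExt C F ⊆ Λ₀ ∧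
      (⋂ α ∈ F, pTail C α) = ⋃ β ∈ pMinExt C F, pTail C β := by
  obtain ⟨G, hGfin, hGsub, hG⟩ := exists_cover C Λ₀ hfa F hfin hne hF
  have hGint : ∀ ε ∈ G, ∀ α ∈ F, ε ∈ pTail C α := by
    intro ε hε α hα
    have : ε ∈ ⋂ α ∈ F, pTail C α := by
      rw [hG]; exact Set.mem_biUnion hε (mem_pTail_self C ε)
    exact Set.mem_iInter₂.mp this α hα
  have hminsub : pMinExt C F ⊆ G := by
    rintro β ⟨hβ1, hβ2⟩
    have : β ∈ ⋂ α ∈ F, pTail C α := Set.mem_iInter₂.mpr hβ1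
    rw [hG] at this
    obtain ⟨ε, hε, hβε⟩ := Set.mem_iUnion₂.mp this
    have := hβ2 ε (hGint ε hε) hβε
    rwa [this] at hε
  refine ⟨hGfin.subset hminsub, hminsub.trans hGsub, ?_⟩
  apply Set.Subset.antisymm
  · intro δ hδ
    have hδG : δ ∈ ⋃ ε ∈ G, pTail C ε := by rw [← hG]; exact hδ
    obtain ⟨ε0, hε0, hδε0⟩ := Set.mem_iUnion₂.mp hδG
    have hGδfin : ({ε | ε ∈ G ∧ δ ∈ pTail C ε} : Set Λ).Finite :=
      hGfin.subset (fun x hx => hx.1)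
    obtain ⟨ε, ⟨hεG, hδε⟩, hεmin⟩ :=
      exists_pMin C (S := {ε | ε ∈ G ∧ δ ∈ pTail C ε}) hGδfin ⟨ε0, hε0, hδε0⟩
    refine Set.mem_biUnion ?_ hδε
    refine ⟨hGint ε hεG, fun γ hγ hεγ => ?_⟩
    have hγmem : γ ∈ ⋃ ε ∈ G, pTail C ε := by
      rw [← hG]; exact Set.mem_iInter₂.mpr hγ
    obtain ⟨ε', hε'G, hγε'⟩ := Set.mem_iUnion₂.mp hγmem
    have hεε' : ε ∈ pTail C ε' := pTail_trans C hγε' hεγ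
    have hδε' : δ ∈ pTail C ε' := pTail_trans C hεε' hδε
    have : ε' = ε := hεmin ε' ⟨hε'G, hδε'⟩ hεε'
    subst this
    exact pTail_antisymm C hεγ hγε'
  · intro x hx
    obtain ⟨β, hβ, hxβ⟩ := Set.mem_iUnion₂.mp hx
    exact Set.mem_iInter₂.mpr fun α hα => pTail_trans C (hβ.1 α hα) hxβ
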